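/- Let N be a positive integer, let A = (a_ij) be a nonnegative real N×N matrix, let σ ≥ 0 and let ω ∈ ℝ^N be a nonnegative vector with Σ_{i=1}^N ω_i a_ij = σ ω_j for all j. Let λ > 0 and α ∈ (0,1) satisfy λ(1+α)σ ≤ 1. Suppose ρ : ℝ → ℝ^N and φ : ℝ → ℝ^N are such that for all t ≥ 0 and all i: 0 ≤ ρ_i(t) ≤ 1, 0 ≤ φ_i(t) ≤ 1, and ρ_i is differentiable at t with ρ_i′(t) = −ρ_i(t) + λ φ_i(t)(1−ρ_i(t)) Σ_{j=1}^N a_ij ρ_j(t). Then the function t ↦ Σ_{i=1}^N ω_i ρ_i(t) is nonincreasing on [0, ∞). -/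

import Mathlib

/-- Monotonicity of the Lyapunov function `V(t) = Σ_i ω_i ρ_i(t)` at or below the
threshold `λ(1+α)σ ≤ 1`: `V` is nonincreasing on `[0,∞)`. -/
theorem stmt_10 (N : ℕ) (hN : 0 < N) (A : Fin N → Fin N → ℝ)
    (hA : ∀ i j, 0 ≤ A i j)
    (σ : ℝ) (hσ : 0 ≤ σ)
    (ω : Fin N → ℝ) (hω : ∀ i, 0 ≤ ω i)
    (heig : ∀ j, ∑ i, ω i * A i j = σ * ω j)
    (lam α : ℝ) (hlam : 0 < lam) (hα : α ∈ Set.Ioo (0 : ℝ) 1)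
    (hthr : lam * (1 + α) * σ ≤ 1)
    (ρ φ : ℝ → Fin N → ℝ)
    (hρ : ∀ t : ℝ, 0 ≤ t → ∀ i, ρ t i ∈ Set.Icc (0 : ℝ) 1)
    (hφ : ∀ t : ℝ, 0 ≤ t → ∀ i, φ t i ∈ Set.Icc (0 : ℝ) 1)
    (hode : ∀ t : ℝ, 0 ≤ t → ∀ i,
      HasDerivAt (fun s => ρ s i)
        (-(ρ t i) + lam * φ t i * (1 - ρ t i) * ∑ j, A i j * ρ t j) t) :
    AntitoneOn (fun t => ∑ i, ω i * ρ t i) (Set.Ici (0 : ℝ)) := by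
  set g : ℝ → ℝ := fun t => ∑ i, ω i * ρ t i with hg
  have hV : ∀ t : ℝ, 0 ≤ t → HasDerivAt g
      (∑ i, ω i * (-(ρ t i) + lam * φ t i * (1 - ρ t i) * ∑ j, A i j * ρ t j)) t := by
    intro t ht
    exact HasDerivAt.fun_sum fun i _ => (hode t ht i).const_mul (ω i)
  have hlamσ : lam * σ ≤ 1 := by
    have h0 : 0 ≤ lam * α * σ :=
      mul_nonneg (mul_nonneg hlam.le hα.1.le) hσ
    nlinarith
  have hD : ∀ t : ℝ, 0 ≤ t →
      (∑ i, ω i * (-(ρ t i) + lam * φ t i * (1 - ρ t i) * ∑ j, A i j * ρ t j)) ≤ 0 := by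
    intro t ht
    have hstep : (∑ i, ω i * (-(ρ t i) + lam * φ t i * (1 - ρ t i) * ∑ j, A i j * ρ t j)) ≤
        ∑ i, ω i * (-(ρ t i) + lam * ∑ j, A i j * ρ t j) := by
      refine Finset.sum_le_sum fun i _ => ?_
      have hS : 0 ≤ ∑ j, A i j * ρ t j :=
        Finset.sum_nonneg fun j _ => mul_nonneg (hA i j) (hρ t ht j).1
      have h1 : φ t i * (1 - ρ t i) ≤ 1 := by
        nlinarith [(hφ t ht i).1, (hφ t ht i).2, (hρ t ht i).1, (hρ t ht i).2]
      have hcoef : lam * φ t i * (1 - ρ t i) ≤ lam := by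
        have := mul_le_mul_of_nonneg_left h1 hlam.le
        nlinarith
      have h2 := mul_le_mul_of_nonneg_right hcoef hS
      have h3 := mul_le_mul_of_nonneg_left (add_le_add_left h2 (-(ρ t i))) (hω i)
      linarith
    have hswap : (∑ i, ω i * (lam * ∑ j, A i j * ρ t j)) = lam * σ * ∑ j, ω j * ρ t j := by
      calc (∑ i, ω i * (lam * ∑ j, A i j * ρ t j))
          = ∑ j, ∑ i, lam * (ω i * A i j) * ρ t j := by
            simp only [Finset.mul_sum]
            rw [Finset.sum_comm]
            exact Finset.sum_congr rfl fun j _ => Finset.sum_congr rfl fun i _ => by ring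
        _ = ∑ j, lam * (∑ i, ω i * A i j) * ρ t j := by
            refine Finset.sum_congr rfl fun j _ => ?_
            rw [Finset.mul_sum, Finset.sum_mul]
        _ = ∑ j, lam * (σ * ω j) * ρ t j := by
            refine Finset.sum_congr rfl fun j _ => by rw [heig]
        _ = lam * σ * ∑ j, ω j * ρ t j := by
            rw [Finset.mul_sum]
            exact Finset.sum_congr rfl fun j _ => by ring
    have hVnn : 0 ≤ ∑ j, ω j * ρ t j :=
      Finset.sum_nonneg fun j _ => mul_nonneg (hω j) (hρ t ht j).1
    have hsplit : (∑ i, ω i * (-(ρ t i) + lam * ∑ j, A i j * ρ t j))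
        = (∑ i, ω i * (lam * ∑ j, A i j * ρ t j)) - ∑ i, ω i * ρ t i := by
      rw [← Finset.sum_sub_distrib]
      exact Finset.sum_congr rfl fun i _ => by ring
    rw [hsplit, hswap] at hstep
    have hle : (lam * σ - 1) * ∑ j, ω j * ρ t j ≤ 0 :=
      mul_nonpos_of_nonpos_of_nonneg (by linarith) hVnn
    nlinarith
  have hcont : ContinuousOn g (Set.Ici (0 : ℝ)) := fun t ht =>
    ((hV t ht).continuousAt).continuousWithinAt
  have hdiff : DifferentiableOn ℝ g (interior (Set.Ici (0 : ℝ))) := by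
    rw [interior_Ici]
    exact fun t ht => ((hV t (le_of_lt ht)).differentiableAt).differentiableWithinAt
  refine antitoneOn_of_deriv_nonpos (convex_Ici 0) hcont hdiff ?_
  intro t ht
  rw [interior_Ici] at ht
  rw [(hV t ht.le).deriv]
  exact hD t ht.le
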